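/- Gyrations are norm-preserving: for u, v, w ∈ ℝ^n for which the κ-additions are defined, ‖gyr[u,v]w‖ = ‖w‖, where gyr[u,v]w = -(u ⊕_κ v) ⊕_κ (u ⊕_κ (v ⊕_κ w)). -/

import Mathlib

open scoped RealInnerProductSpace

noncomputable def kdenom {n : ℕ} (κ : ℝ) (x y : EuclideanSpace ℝ (Fin n)) : ℝ :=
  1 - 2 * κ * ⟪x, y⟫ + κ ^ 2 * ‖x‖ ^ 2 * ‖y‖ ^ 2

noncomputable def kadd {n : ℕ} (κ : ℝ) (x y : EuclideanSpace ℝ (Fin n)) :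
    EuclideanSpace ℝ (Fin n) :=
  (kdenom κ x y)⁻¹ •
    ((1 - 2 * κ * ⟪x, y⟫ - κ * ‖y‖ ^ 2) • x + (1 + κ * ‖x‖ ^ 2) • y)

/-- The gyration operator. -/
noncomputable def kgyr {n : ℕ} (κ : ℝ) (u v w : EuclideanSpace ℝ (Fin n)) :
    EuclideanSpace ℝ (Fin n) :=
  kadd κ (-(kadd κ u v)) (kadd κ u (kadd κ v w))

lemma inner_kadd_left' {n : ℕ} (κ : ℝ) (x y z : EuclideanSpace ℝ (Fin n))
    (h : kdenom κ x y ≠ 0) :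
    ⟪kadd κ x y, z⟫ * kdenom κ x y =
      (1 - 2 * κ * ⟪x, y⟫ - κ * ‖y‖ ^ 2) * ⟪x, z⟫ + (1 + κ * ‖x‖ ^ 2) * ⟪y, z⟫ := by
  simp only [kadd, real_inner_smul_left, inner_add_left]
  field_simp

lemma inner_kadd_right' {n : ℕ} (κ : ℝ) (x y z : EuclideanSpace ℝ (Fin n))
    (h : kdenom κ x y ≠ 0) :
    ⟪z, kadd κ x y⟫ * kdenom κ x y =
      (1 - 2 * κ * ⟪x, y⟫ - κ * ‖y‖ ^ 2) * ⟪z, x⟫ + (1 + κ * ‖x‖ ^ 2) * ⟪z, y⟫ := by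
  simp only [kadd, real_inner_smul_right, inner_add_right]
  field_simp

lemma norm_kadd_sq {n : ℕ} (κ : ℝ) (x y : EuclideanSpace ℝ (Fin n))
    (h : kdenom κ x y ≠ 0) :
    ‖kadd κ x y‖ ^ 2 * kdenom κ x y = ‖x‖ ^ 2 + 2 * ⟪x, y⟫ + ‖y‖ ^ 2 := by
  refine mul_right_cancel₀ h ?_
  have h0 : ‖kadd κ x y‖ ^ 2 = ⟪kadd κ x y, kadd κ x y⟫ :=
    (real_inner_self_eq_norm_sq _).symm
  have L0 := inner_kadd_left' κ x y (kadd κ x y) h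
  have L1 := inner_kadd_right' κ x y x h
  have L2 := inner_kadd_right' κ x y y h
  rw [real_inner_self_eq_norm_sq] at L1 L2
  rw [real_inner_comm x y] at L2
  rw [h0]
  simp only [kdenom] at L0 L1 L2 ⊢
  linear_combination (1 - 2 * κ * ⟪x, y⟫ + κ ^ 2 * ‖x‖ ^ 2 * ‖y‖ ^ 2) * L0 +
    (1 - 2 * κ * ⟪x, y⟫ - κ * ‖y‖ ^ 2) * L1 + (1 + κ * ‖x‖ ^ 2) * L2

lemma kgamma {n : ℕ} (κ : ℝ) (x y : EuclideanSpace ℝ (Fin n))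
    (h : kdenom κ x y ≠ 0) :
    (1 + κ * ‖kadd κ x y‖ ^ 2) * kdenom κ x y =
      (1 + κ * ‖x‖ ^ 2) * (1 + κ * ‖y‖ ^ 2) := by
  have hn := norm_kadd_sq κ x y h
  simp only [kdenom] at hn ⊢
  linear_combination κ * hn

/-- Gyrations preserve the norm. -/
theorem kgyr_norm {n : ℕ} (κ : ℝ) (u v w : EuclideanSpace ℝ (Fin n))
    (h₁ : kdenom κ u v ≠ 0) (h₂ : kdenom κ v w ≠ 0)
    (h₃ : kdenom κ u (kadd κ v w) ≠ 0)
    (h₄ : kdenom κ (-(kadd κ u v)) (kadd κ u (kadd κ v w)) ≠ 0) :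
    ‖kgyr κ u v w‖ = ‖w‖ := by
  by_cases hκ : κ = 0
  · subst hκ
    have h0 : kgyr 0 u v w = w := by
      simp only [kgyr, kadd, kdenom]
      norm_num
    rw [h0]
  · -- the key denominator identity
    have hC : kdenom κ (-(kadd κ u v)) (kadd κ u (kadd κ v w)) *
        (kdenom κ u v * (kdenom κ v w * kdenom κ u (kadd κ v w))) =
        ((1 + κ * ‖u‖ ^ 2) * (1 + κ * ‖v‖ ^ 2)) ^ 2 := by
      have N1 := norm_kadd_sq κ u v h₁
      have N2 := norm_kadd_sq κ v w h₂
      have N3 := norm_kadd_sq κ u (kadd κ v w) h₃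
      have I3 := inner_kadd_right' κ v w u h₂
      have I4 := inner_kadd_right' κ v w v h₂
      have I6 := inner_kadd_right' κ u (kadd κ v w) u h₃
      have I7 := inner_kadd_right' κ u (kadd κ v w) v h₃
      have I8 := inner_kadd_left' κ u v (kadd κ u (kadd κ v w)) h₁
      rw [real_inner_self_eq_norm_sq] at I4 I6
      rw [real_inner_comm u v] at I7
      simp only [kdenom, norm_neg, inner_neg_left] at N1 N2 N3 I3 I4 I6 I7 I8 ⊢
      -- abbreviations (just for readability in the combinations below)
      -- base polys
      -- d2 = 1 - 2*κ*⟪v,w⟫ + κ^2*‖v‖^2*‖w‖^2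
      -- X2b = ‖v‖^2 + 2*⟪v,w⟫ + ‖w‖^2
      -- X3 = (1-2κ⟪v,w⟫-κ‖w‖^2)*⟪u,v⟫ + (1+κ‖v‖^2)*⟪u,w⟫
      have m5 : (1 - 2 * κ * ⟪u, kadd κ v w⟫ + κ ^ 2 * ‖u‖ ^ 2 * ‖kadd κ v w‖ ^ 2) *
          (1 - 2 * κ * ⟪v, w⟫ + κ ^ 2 * ‖v‖ ^ 2 * ‖w‖ ^ 2) =
          (1 - 2 * κ * ⟪v, w⟫ + κ ^ 2 * ‖v‖ ^ 2 * ‖w‖ ^ 2)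
            - 2 * κ * ((1 - 2 * κ * ⟪v, w⟫ - κ * ‖w‖ ^ 2) * ⟪u, v⟫ + (1 + κ * ‖v‖ ^ 2) * ⟪u, w⟫)
            + κ ^ 2 * ‖u‖ ^ 2 * (‖v‖ ^ 2 + 2 * ⟪v, w⟫ + ‖w‖ ^ 2) := by
        linear_combination (-2 * κ) * I3 + (κ ^ 2 * ‖u‖ ^ 2) * N2
      have m6 : ‖kadd κ u (kadd κ v w)‖ ^ 2 *
          ((1 - 2 * κ * ⟪u, kadd κ v w⟫ + κ ^ 2 * ‖u‖ ^ 2 * ‖kadd κ v w‖ ^ 2) *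
            (1 - 2 * κ * ⟪v, w⟫ + κ ^ 2 * ‖v‖ ^ 2 * ‖w‖ ^ 2)) =
          ‖u‖ ^ 2 * (1 - 2 * κ * ⟪v, w⟫ + κ ^ 2 * ‖v‖ ^ 2 * ‖w‖ ^ 2)
            + 2 * ((1 - 2 * κ * ⟪v, w⟫ - κ * ‖w‖ ^ 2) * ⟪u, v⟫ + (1 + κ * ‖v‖ ^ 2) * ⟪u, w⟫)
            + (‖v‖ ^ 2 + 2 * ⟪v, w⟫ + ‖w‖ ^ 2) := by
        linear_combination (1 - 2 * κ * ⟪v, w⟫ + κ ^ 2 * ‖v‖ ^ 2 * ‖w‖ ^ 2) * N3 + 2 * I3 + N2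
      have m7 : ⟪u, kadd κ u (kadd κ v w)⟫ *
          ((1 - 2 * κ * ⟪u, kadd κ v w⟫ + κ ^ 2 * ‖u‖ ^ 2 * ‖kadd κ v w‖ ^ 2) *
            (1 - 2 * κ * ⟪v, w⟫ + κ ^ 2 * ‖v‖ ^ 2 * ‖w‖ ^ 2)) =
          ((1 - 2 * κ * ⟪v, w⟫ + κ ^ 2 * ‖v‖ ^ 2 * ‖w‖ ^ 2)
            - 2 * κ * ((1 - 2 * κ * ⟪v, w⟫ - κ * ‖w‖ ^ 2) * ⟪u, v⟫ + (1 + κ * ‖v‖ ^ 2) * ⟪u, w⟫)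
            - κ * (‖v‖ ^ 2 + 2 * ⟪v, w⟫ + ‖w‖ ^ 2)) * ‖u‖ ^ 2
          + (1 + κ * ‖u‖ ^ 2) *
            ((1 - 2 * κ * ⟪v, w⟫ - κ * ‖w‖ ^ 2) * ⟪u, v⟫ + (1 + κ * ‖v‖ ^ 2) * ⟪u, w⟫) := by
        linear_combination (1 - 2 * κ * ⟪v, w⟫ + κ ^ 2 * ‖v‖ ^ 2 * ‖w‖ ^ 2) * I6 +
          (1 - κ * ‖u‖ ^ 2) * I3 + (-κ * ‖u‖ ^ 2) * N2
      have m8 : ⟪v, kadd κ u (kadd κ v w)⟫ *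
          ((1 - 2 * κ * ⟪u, kadd κ v w⟫ + κ ^ 2 * ‖u‖ ^ 2 * ‖kadd κ v w‖ ^ 2) *
            (1 - 2 * κ * ⟪v, w⟫ + κ ^ 2 * ‖v‖ ^ 2 * ‖w‖ ^ 2)) =
          ((1 - 2 * κ * ⟪v, w⟫ + κ ^ 2 * ‖v‖ ^ 2 * ‖w‖ ^ 2)
            - 2 * κ * ((1 - 2 * κ * ⟪v, w⟫ - κ * ‖w‖ ^ 2) * ⟪u, v⟫ + (1 + κ * ‖v‖ ^ 2) * ⟪u, w⟫)
            - κ * (‖v‖ ^ 2 + 2 * ⟪v, w⟫ + ‖w‖ ^ 2)) * ⟪u, v⟫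
          + (1 + κ * ‖u‖ ^ 2) *
            ((1 - 2 * κ * ⟪v, w⟫ - κ * ‖w‖ ^ 2) * ‖v‖ ^ 2 + (1 + κ * ‖v‖ ^ 2) * ⟪v, w⟫) := by
        linear_combination (1 - 2 * κ * ⟪v, w⟫ + κ ^ 2 * ‖v‖ ^ 2 * ‖w‖ ^ 2) * I7 +
          (-2 * κ * ⟪u, v⟫) * I3 + (-κ * ⟪u, v⟫) * N2 + (1 + κ * ‖u‖ ^ 2) * I4
      have m9 : ⟪kadd κ u v, kadd κ u (kadd κ v w)⟫ *
          ((1 - 2 * κ * ⟪u, v⟫ + κ ^ 2 * ‖u‖ ^ 2 * ‖v‖ ^ 2) *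
            ((1 - 2 * κ * ⟪u, kadd κ v w⟫ + κ ^ 2 * ‖u‖ ^ 2 * ‖kadd κ v w‖ ^ 2) *
              (1 - 2 * κ * ⟪v, w⟫ + κ ^ 2 * ‖v‖ ^ 2 * ‖w‖ ^ 2))) =
          (1 - 2 * κ * ⟪u, v⟫ - κ * ‖v‖ ^ 2) *
            (((1 - 2 * κ * ⟪v, w⟫ + κ ^ 2 * ‖v‖ ^ 2 * ‖w‖ ^ 2)
              - 2 * κ * ((1 - 2 * κ * ⟪v, w⟫ - κ * ‖w‖ ^ 2) * ⟪u, v⟫ + (1 + κ * ‖v‖ ^ 2) * ⟪u, w⟫)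
              - κ * (‖v‖ ^ 2 + 2 * ⟪v, w⟫ + ‖w‖ ^ 2)) * ‖u‖ ^ 2
            + (1 + κ * ‖u‖ ^ 2) *
              ((1 - 2 * κ * ⟪v, w⟫ - κ * ‖w‖ ^ 2) * ⟪u, v⟫ + (1 + κ * ‖v‖ ^ 2) * ⟪u, w⟫))
          + (1 + κ * ‖u‖ ^ 2) *
            (((1 - 2 * κ * ⟪v, w⟫ + κ ^ 2 * ‖v‖ ^ 2 * ‖w‖ ^ 2)
              - 2 * κ * ((1 - 2 * κ * ⟪v, w⟫ - κ * ‖w‖ ^ 2) * ⟪u, v⟫ + (1 + κ * ‖v‖ ^ 2) * ⟪u, w⟫)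
              - κ * (‖v‖ ^ 2 + 2 * ⟪v, w⟫ + ‖w‖ ^ 2)) * ⟪u, v⟫
            + (1 + κ * ‖u‖ ^ 2) *
              ((1 - 2 * κ * ⟪v, w⟫ - κ * ‖w‖ ^ 2) * ‖v‖ ^ 2 + (1 + κ * ‖v‖ ^ 2) * ⟪v, w⟫)) := by
        linear_combination ((1 - 2 * κ * ⟪u, kadd κ v w⟫ + κ ^ 2 * ‖u‖ ^ 2 * ‖kadd κ v w‖ ^ 2) *
            (1 - 2 * κ * ⟪v, w⟫ + κ ^ 2 * ‖v‖ ^ 2 * ‖w‖ ^ 2)) * I8 +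
          (1 - 2 * κ * ⟪u, v⟫ - κ * ‖v‖ ^ 2) * m7 + (1 + κ * ‖u‖ ^ 2) * m8
      linear_combination (1 - 2 * κ * ⟪u, v⟫ + κ ^ 2 * ‖u‖ ^ 2 * ‖v‖ ^ 2) * m5 +
        (2 * κ) * m9 +
        (κ ^ 2 * ‖kadd κ u v‖ ^ 2 * (1 - 2 * κ * ⟪u, v⟫ + κ ^ 2 * ‖u‖ ^ 2 * ‖v‖ ^ 2)) * m6 +
        (κ ^ 2 * (‖u‖ ^ 2 * (1 - 2 * κ * ⟪v, w⟫ + κ ^ 2 * ‖v‖ ^ 2 * ‖w‖ ^ 2)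
            + 2 * ((1 - 2 * κ * ⟪v, w⟫ - κ * ‖w‖ ^ 2) * ⟪u, v⟫ + (1 + κ * ‖v‖ ^ 2) * ⟪u, w⟫)
            + (‖v‖ ^ 2 + 2 * ⟪v, w⟫ + ‖w‖ ^ 2))) * N1
    have g1 := kgamma κ u v h₁
    have g2 := kgamma κ v w h₂
    have g3 := kgamma κ u (kadd κ v w) h₃
    have g4 := kgamma κ (-(kadd κ u v)) (kadd κ u (kadd κ v w)) h₄
    rw [norm_neg] at g4
    have hA : ((1 + κ * ‖u‖ ^ 2) * (1 + κ * ‖v‖ ^ 2)) ^ 2 ≠ 0 := by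
      rw [← hC]
      exact mul_ne_zero h₄ (mul_ne_zero h₁ (mul_ne_zero h₂ h₃))
    have key : (1 + κ * ‖kgyr κ u v w‖ ^ 2) * ((1 + κ * ‖u‖ ^ 2) * (1 + κ * ‖v‖ ^ 2)) ^ 2 =
        (1 + κ * ‖w‖ ^ 2) * ((1 + κ * ‖u‖ ^ 2) * (1 + κ * ‖v‖ ^ 2)) ^ 2 := by
      simp only [kgyr]
      linear_combination
        (-(1 + κ * ‖kadd κ (-(kadd κ u v)) (kadd κ u (kadd κ v w))‖ ^ 2)) * hC +
        (kdenom κ u v * (kdenom κ v w * kdenom κ u (kadd κ v w))) * g4 +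
        ((1 + κ * ‖kadd κ u (kadd κ v w)‖ ^ 2) *
          (kdenom κ v w * kdenom κ u (kadd κ v w))) * g1 +
        ((1 + κ * ‖u‖ ^ 2) * (1 + κ * ‖v‖ ^ 2) * kdenom κ v w) * g3 +
        ((1 + κ * ‖u‖ ^ 2) ^ 2 * (1 + κ * ‖v‖ ^ 2)) * g2
    have h5 : 1 + κ * ‖kgyr κ u v w‖ ^ 2 = 1 + κ * ‖w‖ ^ 2 := mul_right_cancel₀ hA key
    have h6 : ‖kgyr κ u v w‖ ^ 2 = ‖w‖ ^ 2 := by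
      have := add_left_cancel h5
      exact mul_left_cancel₀ hκ this
    rw [← Real.sqrt_sq (norm_nonneg (kgyr κ u v w)), h6, Real.sqrt_sq (norm_nonneg w)]
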